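/- Let n ≥ 1, let a : Fin n → ℕ be a count vector with total sum w = ∑_j a_j satisfying w ≥ 1, and let k : Fin n be a coordinate with a_k = 0. Let e_k denote the unit count vector with value 1 at position k and 0 elsewhere. Then the Shannon entropy of the updated vector a + e_k satisfies the exact identity H(a + e_k) = (w/(w+1)) · H(a) − (w/(w+1)) · ln(w/(w+1)) − (1/(w+1)) · ln(1/(w+1)). (This is the key computational identity in the proof of the paper's Proposition 2, describing how IP entropy changes when an incremental view is for a previously unwatched video.) -/

import Mathlib

open Real Finset

/-- Shannon entropy of a count vector `a : Fin n → ℕ` with total sum `∑ i, a i`: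
`H(a) = -∑ j, (a j / w) * ln (a j / w)` where `w = ∑ i, a i`.
(Terms with `a j = 0` contribute `0` since `Real.log 0 = 0`.) -/
noncomputable def countEntropy {n : ℕ} (a : Fin n → ℕ) : ℝ :=
  -∑ j, ((a j : ℝ) / (∑ i, a i : ℕ)) * Real.log ((a j : ℝ) / (∑ i, a i : ℕ))

/-- the exact update identity for the entropy when a previously
unwatched coordinate `k` (i.e. `a k = 0`) receives one additional view:
`H(a + e_k) = (w/(w+1)) H(a) - (w/(w+1)) ln (w/(w+1)) - (1/(w+1)) ln (1/(w+1))`. -/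
theorem entropy_update_identity (n : ℕ) (hn : 1 ≤ n) (a : Fin n → ℕ)
    (w : ℕ) (hw : w = ∑ j, a j) (hw1 : 1 ≤ w) (k : Fin n) (hk : a k = 0) :
    countEntropy (a + Pi.single k 1 : Fin n → ℕ) =
      ((w : ℝ) / (w + 1)) * countEntropy a
        - ((w : ℝ) / (w + 1)) * Real.log ((w : ℝ) / (w + 1))
        - (1 / ((w : ℝ) + 1)) * Real.log (1 / ((w : ℝ) + 1)) := by
  have hWpos : (0:ℝ) < (w:ℝ) := by exact_mod_cast hw1
  have hW1 : (0:ℝ) < (w:ℝ) + 1 := by linarith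
  have hsum : (∑ i, (a + Pi.single k 1 : Fin n → ℕ) i) = w + 1 := by
    simp [Pi.add_apply, Finset.sum_add_distrib, Finset.sum_pi_single, hw]
  unfold countEntropy
  rw [hsum, ← hw]
  push_cast
  have hek : (a + Pi.single k 1 : Fin n → ℕ) k = 1 := by simp [hk]
  rw [← Finset.sum_erase_add Finset.univ _ (Finset.mem_univ k),
      ← Finset.sum_erase_add Finset.univ
        (fun j => ((a j : ℝ) / (w:ℝ)) * Real.log ((a j : ℝ) / (w:ℝ)))
        (Finset.mem_univ k)]
  have hkterm : ((a k : ℝ) / (w:ℝ)) * Real.log ((a k : ℝ) / (w:ℝ)) = 0 := by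
    simp [hk]
  have hsum2 : ∑ j ∈ Finset.univ.erase k, (a j : ℝ) = (w:ℝ) := by
    have h2 : ∑ j ∈ Finset.univ.erase k, (a j:ℝ) + (a k:ℝ)
        = ∑ j, (a j:ℝ) := Finset.sum_erase_add _ _ (Finset.mem_univ k)
    rw [hk] at h2
    have h3 : ((∑ j, a j : ℕ) : ℝ) = ∑ j, (a j:ℝ) := by push_cast; rfl
    rw [hw]; push_cast at h2 ⊢; linarith
  have key : ∀ j ∈ Finset.univ.erase k,
      (((a + Pi.single k 1 : Fin n → ℕ) j : ℝ) / ((w:ℝ)+1)) * Real.log (((a + Pi.single k 1 : Fin n → ℕ) j : ℝ) / ((w:ℝ)+1))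
      = ((w:ℝ)/((w:ℝ)+1)) * (((a j : ℝ)/(w:ℝ)) * Real.log ((a j : ℝ)/(w:ℝ)))
        + ((a j : ℝ)/((w:ℝ)+1)) * Real.log ((w:ℝ)/((w:ℝ)+1)) := by
    intro j hj
    have hjk : j ≠ k := Finset.ne_of_mem_erase hj
    have hej : (a + Pi.single k 1 : Fin n → ℕ) j = a j := by
      simp [Pi.single_eq_of_ne hjk]
    rw [hej]
    rcases Nat.eq_zero_or_pos (a j) with h0 | hpos
    · simp [h0]
    · have haj : (0:ℝ) < (a j : ℝ) := by exact_mod_cast hpos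
      have hlog : Real.log ((a j : ℝ) / ((w:ℝ)+1))
          = Real.log ((a j : ℝ)/(w:ℝ)) + Real.log ((w:ℝ)/((w:ℝ)+1)) := by
        rw [← Real.log_mul (by positivity) (by positivity)]
        congr 1
        field_simp
      rw [hlog]
      field_simp
  rw [Finset.sum_congr rfl key, Finset.sum_add_distrib, ← Finset.mul_sum,
      ← Finset.sum_mul, ← Finset.sum_div, hsum2, hek]
  simp only [hk, Nat.cast_zero, Nat.cast_one]
  ring
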